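/- Let A be a finite abelian group of order N, and let a ∈ A have order d. The trace of a acting on the k-th exterior power Λ^k of the regular representation of A equals (−1)^{(d−1)(k/d)}·C(N/d, k/d) if d divides k, and 0 otherwise. -/

import Mathlib

open ExteriorAlgebra

set_option linter.unusedSectionVars false
set_option linter.unusedVariables false
namespace Stmt17

variable {A : Type} [CommGroup A] [Fintype A] [LinearOrder A]

abbrev K (A : Type) [DecidableEq A] (k : ℕ) := {s : Finset A // s.card = k}

variable {k : ℕ}

/-- the i-th element of s in order -/
def el (s : K A k) (i : Fin k) : A := (s.1.orderIsoOfFin s.2 i : A)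

lemma el_mem (s : K A k) (i : Fin k) : el s i ∈ s.1 := (s.1.orderIsoOfFin s.2 i).2

lemma el_inj (s : K A k) : Function.Injective (el s) :=
  fun i j h => (s.1.orderIsoOfFin s.2).injective (Subtype.ext h)

noncomputable def sf (s : K A k) : Fin k → (A →₀ ℂ) := fun i => Finsupp.single (el s i) 1

noncomputable def E (s : K A k) : ExteriorAlgebra ℂ (A →₀ ℂ) := ιMulti ℂ k (sf s)

lemma E_mem (s : K A k) : E s ∈ ⋀[ℂ]^k (A →₀ ℂ) := ιMulti_range ℂ k ⟨_, rfl⟩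

noncomputable def ψ (s : K A k) : ExteriorAlgebra ℂ (A →₀ ℂ) →ₗ[ℂ] ℂ :=
  liftAlternating (Function.update 0 k
    (((Pi.basisFun ℂ (Fin k)).det).compLinearMap
      (LinearMap.pi fun i => Finsupp.lapply (el s i))))

lemma ψ_ιMulti (s : K A k) (v : Fin k → (A →₀ ℂ)) :
    ψ s (ιMulti ℂ k v) = (Matrix.of fun i j => v j (el s i)).det := by
  rw [ψ, liftAlternating_apply_ιMulti, Function.update_self,
    AlternatingMap.compLinearMap_apply, Module.Basis.det_apply]
  congr 1

lemma single_el_apply (t s : K A k) (j i : Fin k) :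
    sf t j (el s i) = if el t j = el s i then (1 : ℂ) else 0 := by
  rw [sf, Finsupp.single_apply]

lemma ψ_E (s t : K A k) : ψ s (E t) = if s = t then 1 else 0 := by
  rw [E, ψ_ιMulti]
  split_ifs with h
  · subst h
    have : (Matrix.of fun i j => sf s j (el s i)) = (1 : Matrix (Fin k) (Fin k) ℂ) := by
      ext i j
      rw [Matrix.of_apply, single_el_apply, Matrix.one_apply]
      by_cases hij : i = j
      · simp [hij]
      · rw [if_neg (fun hc => hij (el_inj s hc.symm)), if_neg hij]
    rw [this, Matrix.det_one]
  · -- some element of t is not in s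
    have hne : t.1 ≠ s.1 := fun hc => (h (Subtype.ext hc.symm)).elim
    have hx : ∃ x ∈ t.1, x ∉ s.1 := by
      by_contra hc
      push_neg at hc
      exact hne (Finset.eq_of_subset_of_card_le hc (by rw [s.2, t.2]))
    obtain ⟨x, hxt, hxs⟩ := hx
    obtain ⟨j, hj⟩ : ∃ j, el t j = x := ⟨(t.1.orderIsoOfFin t.2).symm ⟨x, hxt⟩, by
      simp [el]⟩
    apply Matrix.det_eq_zero_of_column_eq_zero j
    intro i
    rw [Matrix.of_apply, single_el_apply, if_neg]
    rw [hj]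
    exact fun hc => hxs (hc ▸ el_mem s i)

lemma ιMulti_single_mem_span (r : Fin k → A) :
    ιMulti ℂ k (fun i => Finsupp.single (r i) (1 : ℂ)) ∈
      Submodule.span ℂ (Set.range (E (A := A) (k := k))) := by
  by_cases hr : Function.Injective r
  · set t : K A k := ⟨Finset.univ.image r, by
      rw [Finset.card_image_of_injective _ hr, Finset.card_univ, Fintype.card_fin]⟩ with ht
    have hmem : ∀ i, r i ∈ t.1 := fun i => Finset.mem_image_of_mem r (Finset.mem_univ i)
    have hbij : Function.Bijective (fun i => (⟨r i, hmem i⟩ : {x // x ∈ t.1})) := by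
      rw [Fintype.bijective_iff_injective_and_card]
      constructor
      · exact fun i j hij => hr (congrArg Subtype.val hij)
      · rw [Fintype.card_coe, t.2, Fintype.card_fin]
    set π : Equiv.Perm (Fin k) :=
      (Equiv.ofBijective _ hbij).trans (t.1.orderIsoOfFin t.2).toEquiv.symm with hπ
    have hcomp : (fun i => Finsupp.single (r i) (1:ℂ)) = sf t ∘ π := by
      funext i
      simp only [Function.comp_apply, sf]
      congr 1
      have : el t (π i) = ((t.1.orderIsoOfFin t.2) ((t.1.orderIsoOfFin t.2).symm
        (Equiv.ofBijective _ hbij i)) : A) := rfl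
      rw [this, OrderIso.apply_symm_apply]
      rfl
    rw [hcomp, AlternatingMap.map_perm]
    exact Submodule.smul_mem _ _ (Submodule.subset_span ⟨t, rfl⟩)
  · have hni : ¬ Function.Injective (fun i => Finsupp.single (r i) (1:ℂ)) := by
      intro hc
      exact hr fun i j hij => hc (by simp only [hij])
    rw [AlternatingMap.map_eq_zero_of_not_injective _ _ hni]
    exact Submodule.zero_mem _

lemma span_E : (⋀[ℂ]^k (A →₀ ℂ) : Submodule ℂ _) ≤ Submodule.span ℂ (Set.range (E (A := A) (k := k))) := by
  rw [← ιMulti_span_fixedDegree, Submodule.span_le]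
  rintro _ ⟨v, rfl⟩
  have hv : v = fun i => ∑ b : A, v i b • Finsupp.single b (1 : ℂ) := by
    funext i
    ext b
    simp [Finsupp.single_apply, Finset.sum_ite_eq']
  have expand : ιMulti ℂ k v =
      ∑ r : Fin k → A, (∏ i, v i (r i)) • ιMulti ℂ k (fun i => Finsupp.single (r i) (1:ℂ)) := by
    conv_lhs => rw [hv]
    rw [show (ιMulti ℂ k (M := A →₀ ℂ)) (fun i => ∑ b : A, v i b • Finsupp.single b (1:ℂ))
      = (ιMulti ℂ k (M := A →₀ ℂ)).toMultilinearMap (fun i => ∑ b : A, v i b • Finsupp.single b (1:ℂ)) from rfl,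
      MultilinearMap.map_sum]
    exact Finset.sum_congr rfl fun r _ => MultilinearMap.map_smul_univ _ _ _
  rw [SetLike.mem_coe, expand]
  exact Submodule.sum_mem _ fun r _ => Submodule.smul_mem _ _ (ιMulti_single_mem_span r)

noncomputable def Esub (s : K A k) : (⋀[ℂ]^k (A →₀ ℂ) : Submodule ℂ _) := ⟨E s, E_mem s⟩

lemma li : LinearIndependent ℂ (Esub (A := A) (k := k)) := by
  rw [Fintype.linearIndependent_iff]
  intro c hc s
  have h2 := congrArg (fun x : (⋀[ℂ]^k (A →₀ ℂ) : Submodule ℂ _) => ψ s (x : ExteriorAlgebra ℂ (A →₀ ℂ))) hc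
  simp only [Submodule.coe_sum, Submodule.coe_smul, map_sum, map_smul, Esub, ψ_E,
    ZeroMemClass.coe_zero, map_zero] at h2
  rw [Finset.sum_congr rfl (fun t _ => by rw [smul_eq_mul, mul_ite, mul_one, mul_zero]),
    Finset.sum_ite_eq] at h2
  simpa using h2

lemma span_top : ⊤ ≤ Submodule.span ℂ (Set.range (Esub (A := A) (k := k))) := by
  intro x _
  have h1 : (x : ExteriorAlgebra ℂ (A →₀ ℂ)) ∈
      Submodule.map (⋀[ℂ]^k (A →₀ ℂ) : Submodule ℂ _).subtype
        (Submodule.span ℂ (Set.range (Esub (A := A) (k := k)))) := by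
    rw [Submodule.map_span]
    have : (⋀[ℂ]^k (A →₀ ℂ) : Submodule ℂ _).subtype '' Set.range (Esub (A := A) (k := k))
        = Set.range (E (A := A) (k := k)) := by
      rw [← Set.range_comp]
      rfl
    rw [this]
    exact span_E x.2
  obtain ⟨y, hy, hyx⟩ := h1
  have : y = x := Subtype.ext hyx
  exact this ▸ hy

noncomputable def B : Module.Basis (K A k) ℂ (⋀[ℂ]^k (A →₀ ℂ) : Submodule ℂ _) := Module.Basis.mk li span_top

lemma B_apply (t : K A k) : (B (A := A) (k := k)) t = Esub t := Module.Basis.mk_apply _ _ _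

section Group

variable (a : A)

lemma mk_pow_mul (n : ℕ) (x : A) :
    (QuotientGroup.mk (a ^ n * x) : A ⧸ Subgroup.zpowers a) = QuotientGroup.mk x := by
  rw [QuotientGroup.eq]
  have h1 : (a ^ n * x)⁻¹ * x = (a ^ n)⁻¹ := by
    rw [mul_inv_rev, inv_mul_cancel_comm]
  rw [h1]
  exact Subgroup.inv_mem _ (Subgroup.mem_zpowers_iff.2 ⟨(n : ℤ), zpow_natCast a n⟩)

lemma mk_mul (x : A) :
    (QuotientGroup.mk (a * x) : A ⧸ Subgroup.zpowers a) = QuotientGroup.mk x := by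
  simpa using mk_pow_mul a 1 x

noncomputable def Fequiv : (A ⧸ Subgroup.zpowers a) × Fin (orderOf a) ≃ A := by
  apply Equiv.ofBijective (fun qj => a ^ (qj.2 : ℕ) * qj.1.out)
  constructor
  · rintro ⟨q, i⟩ ⟨q', j⟩ h
    simp only at h
    have hq : q = q' := by
      have h2 := congrArg (QuotientGroup.mk (s := Subgroup.zpowers a)) h
      rwa [mk_pow_mul, mk_pow_mul, QuotientGroup.out_eq', QuotientGroup.out_eq'] at h2
    subst hq
    have h3 : a ^ (i : ℕ) = a ^ (j : ℕ) := mul_right_cancel h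
    have h4 := pow_eq_pow_iff_modEq.1 h3
    have h5 : (i : ℕ) = (j : ℕ) := by
      rw [Nat.ModEq] at h4
      rwa [Nat.mod_eq_of_lt i.isLt, Nat.mod_eq_of_lt j.isLt] at h4
    exact Prod.ext rfl (Fin.ext h5)
  · intro x
    set q : A ⧸ Subgroup.zpowers a := QuotientGroup.mk x with hq
    have hmem : q.out⁻¹ * x ∈ Subgroup.zpowers a :=
      QuotientGroup.eq.1 (by rw [QuotientGroup.out_eq'])
    obtain ⟨n, hn⟩ := (Submonoid.mem_powers_iff _ _).1 (mem_powers_iff_mem_zpowers.2 hmem)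
    refine ⟨(q, ⟨n % orderOf a, Nat.mod_lt _ (orderOf_pos a)⟩), ?_⟩
    simp only
    rw [pow_mod_orderOf, hn, inv_mul_cancel_comm]

lemma Fequiv_apply (q : A ⧸ Subgroup.zpowers a) (j : Fin (orderOf a)) :
    Fequiv a (q, j) = a ^ (j : ℕ) * q.out := rfl

lemma Fequiv_rot (q : A ⧸ Subgroup.zpowers a) (j : Fin (orderOf a)) :
    a * Fequiv a (q, j) =
      Fequiv a (q, ⟨((j : ℕ) + 1) % orderOf a, Nat.mod_lt _ (orderOf_pos a)⟩) := by
  rw [Fequiv_apply, Fequiv_apply, pow_mod_orderOf, pow_succ, mul_assoc, mul_left_comm]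

/-- commute a product-subtype equivalence -/
def prodSub {α β : Type*} (p : α → Prop) : {x : α // p x} × β ≃ {y : α × β // p y.1} where
  toFun x := ⟨(x.1.1, x.2), x.1.2⟩
  invFun y := (⟨y.1.1, y.2⟩, y.1.2)
  left_inv x := rfl
  right_inv y := rfl

lemma finRotate_val {n : ℕ} (hn : 0 < n) (j : Fin n) :
    ((finRotate n) j : ℕ) = ((j : ℕ) + 1) % n := by
  obtain ⟨m, rfl⟩ : ∃ m, n = m + 1 := ⟨n - 1, (Nat.succ_pred_eq_of_pos hn).symm⟩
  rw [finRotate_succ_apply, Fin.add_def]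
  simp [Fin.val_one', Nat.add_mod_mod]

lemma sign_finRotate' {n : ℕ} (hn : 0 < n) :
    Equiv.Perm.sign (finRotate n) = (-1) ^ (n - 1) := by
  obtain ⟨m, rfl⟩ : ∃ m, n = m + 1 := ⟨n - 1, (Nat.succ_pred_eq_of_pos hn).symm⟩
  simp [sign_finRotate]

variable {u : Finset A} (hu : ∀ x : A, x ∈ u ↔ a * x ∈ u)
include hu

lemma pow_mem_iff (n : ℕ) (x : A) : a ^ n * x ∈ u ↔ x ∈ u := by
  induction n with
  | zero => simp
  | succ n ih =>
    rw [pow_succ, mul_comm (a ^ n) a, mul_assoc]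
    rw [← hu (a ^ n * x)]
    exact ih

lemma mem_congr_mk {x y : A} (h : (QuotientGroup.mk x : A ⧸ Subgroup.zpowers a) = QuotientGroup.mk y) :
    x ∈ u ↔ y ∈ u := by
  have hmem : y⁻¹ * x ∈ Subgroup.zpowers a := QuotientGroup.eq.1 h.symm
  obtain ⟨n, hn⟩ := (Submonoid.mem_powers_iff _ _).1 (mem_powers_iff_mem_zpowers.2 hmem)
  have hx : x = a ^ n * y := by rw [hn, inv_mul_cancel_comm]
  rw [hx]
  exact pow_mem_iff a hu n y

noncomputable def uEquiv :
    ({q : A ⧸ Subgroup.zpowers a // q.out ∈ u} × Fin (orderOf a)) ≃ {x : A // x ∈ u} :=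
  (prodSub _).trans ((Fequiv a).subtypeEquiv (fun qj => by
    rw [Fequiv_apply, pow_mem_iff a hu]))

lemma uEquiv_apply_val (q : A ⧸ Subgroup.zpowers a) (hq : q.out ∈ u) (j : Fin (orderOf a)) :
    (uEquiv a hu (⟨q, hq⟩, j) : A) = a ^ (j : ℕ) * q.out := rfl

lemma card_invariant : u.card = (Finset.univ.filter
    (fun q : A ⧸ Subgroup.zpowers a => q.out ∈ u)).card * orderOf a := by
  classical
  have h1 := Fintype.card_congr (uEquiv a hu).symm
  rwa [Fintype.card_coe, Fintype.card_prod, Fintype.card_fin, Fintype.card_subtype] at h1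

lemma dvd_card_invariant : orderOf a ∣ u.card :=
  ⟨(Finset.univ.filter (fun q : A ⧸ Subgroup.zpowers a => q.out ∈ u)).card,
    by rw [card_invariant a hu, mul_comm]⟩

lemma sign_mulLeft_subtypePerm :
    Equiv.Perm.sign ((Equiv.mulLeft a).subtypePerm (fun x => (hu x).symm) : Equiv.Perm {x : A // x ∈ u})
      = ((-1) ^ (orderOf a - 1)) ^ (u.card / orderOf a) := by
  classical
  have key : (Equiv.mulLeft a).subtypePerm (fun x => (hu x).symm)
      = (uEquiv a hu).permCongr (Equiv.prodCongrRight fun _ => finRotate (orderOf a)) := by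
    apply Equiv.ext
    intro x
    rw [Equiv.permCongr_apply]
    rcases hsymm : (uEquiv a hu).symm x with ⟨⟨q, hq⟩, j⟩
    have hx : x = uEquiv a hu (⟨q, hq⟩, j) := by rw [← hsymm, Equiv.apply_symm_apply]
    rw [hx]
    apply Subtype.ext
    rw [Equiv.prodCongrRight_apply]
    show a * (uEquiv a hu (⟨q, hq⟩, j) : A) = _
    rw [uEquiv_apply_val, uEquiv_apply_val]
    rw [finRotate_val (orderOf_pos a), pow_mod_orderOf, pow_succ, mul_assoc, mul_left_comm]
  rw [key, Equiv.Perm.sign_permCongr, Equiv.Perm.sign_prodCongrRight,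
    Finset.prod_const, sign_finRotate' (orderOf_pos a)]
  congr 1
  rw [Finset.card_univ, Fintype.card_subtype]
  exact (Nat.div_eq_of_eq_mul_left (orderOf_pos a) (card_invariant a hu)).symm

end Group

section Count

variable (a : A)

lemma inv_iff {s : Finset A} (hP : ∀ x ∈ s, a * x ∈ s) : ∀ x : A, x ∈ s ↔ a * x ∈ s := by
  have himg : s.image (a * ·) = s := by
    apply Finset.eq_of_subset_of_card_le
    · intro y hy
      obtain ⟨x, hx, rfl⟩ := Finset.mem_image.1 hy
      exact hP x hx
    · rw [Finset.card_image_of_injective _ (mul_right_injective a)]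
  intro x
  refine ⟨hP x, fun hx => ?_⟩
  rw [← himg] at hx
  obtain ⟨x', hx', hxx⟩ := Finset.mem_image.1 hx
  rwa [← mul_right_injective a hxx]

lemma card_Q : Fintype.card (A ⧸ Subgroup.zpowers a) = Fintype.card A / orderOf a := by
  have h := Subgroup.card_eq_card_quotient_mul_card_subgroup (Subgroup.zpowers a)
  rw [Nat.card_zpowers] at h
  rw [Nat.card_eq_fintype_card, Nat.card_eq_fintype_card] at h
  exact (Nat.div_eq_of_eq_mul_left (orderOf_pos a) h).symm

lemma count_invariant (k : ℕ) :
    (Finset.univ.filter (fun s : K A k => ∀ x ∈ s.1, a * x ∈ s.1)).card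
      = if orderOf a ∣ k then (Fintype.card A / orderOf a).choose (k / orderOf a) else 0 := by
  classical
  split_ifs with h
  · have hbij : (Finset.univ.filter (fun s : K A k => ∀ x ∈ s.1, a * x ∈ s.1)).card
        = (Finset.powersetCard (k / orderOf a)
            (Finset.univ : Finset (A ⧸ Subgroup.zpowers a))).card := by
      apply Finset.card_bij'
        (i := fun s _ => Finset.univ.filter (fun q : A ⧸ Subgroup.zpowers a => q.out ∈ s.1))
        (j := fun T hT => (⟨Finset.univ.filter
            (fun x : A => (QuotientGroup.mk x : A ⧸ Subgroup.zpowers a) ∈ T), by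
          have hinv : ∀ x : A, x ∈ Finset.univ.filter
              (fun x : A => (QuotientGroup.mk x : A ⧸ Subgroup.zpowers a) ∈ T) ↔
              a * x ∈ Finset.univ.filter
              (fun x : A => (QuotientGroup.mk x : A ⧸ Subgroup.zpowers a) ∈ T) := by
            intro x
            simp only [Finset.mem_filter, Finset.mem_univ, true_and, mk_mul]
          have hc := card_invariant a hinv
          have hT2 : (Finset.univ.filter (fun q : A ⧸ Subgroup.zpowers a =>
              q.out ∈ Finset.univ.filter
              (fun x : A => (QuotientGroup.mk x : A ⧸ Subgroup.zpowers a) ∈ T))) = T := by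
            ext q
            simp only [Finset.mem_filter, Finset.mem_univ, true_and]
            rw [QuotientGroup.out_eq']
          rw [hT2, (Finset.mem_powersetCard.1 hT).2] at hc
          rw [hc, Nat.div_mul_cancel h]⟩ : K A k))
      case hi =>
        intro s hs
        rw [Finset.mem_powersetCard]
        refine ⟨Finset.subset_univ _, ?_⟩
        have hu := inv_iff a (Finset.mem_filter.1 hs).2
        have hc := card_invariant a hu
        rw [s.2] at hc
        exact (Nat.div_eq_of_eq_mul_left (orderOf_pos a) hc).symm
      case hj =>
        intro T hT
        rw [Finset.mem_filter]
        refine ⟨Finset.mem_univ _, ?_⟩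
        intro x hx
        rw [Finset.mem_filter] at hx ⊢
        exact ⟨Finset.mem_univ _, by rw [mk_mul]; exact hx.2⟩
      case left_inv =>
        intro s hs
        apply Subtype.ext
        ext x
        simp only [Finset.mem_filter, Finset.mem_univ, true_and]
        have hu := inv_iff a (Finset.mem_filter.1 hs).2
        exact mem_congr_mk a hu (QuotientGroup.out_eq' (QuotientGroup.mk x))
      case right_inv =>
        intro T hT
        ext q
        simp only [Finset.mem_filter, Finset.mem_univ, true_and]
        rw [QuotientGroup.out_eq']
    rw [hbij, Finset.card_powersetCard, Finset.card_univ, card_Q]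
  · rw [Finset.card_eq_zero, Finset.filter_eq_empty_iff]
    intro s _
    intro hP
    exact h (s.2 ▸ dvd_card_invariant a (inv_iff a hP))

end Count

section Main

variable (a : A)

lemma det_term (s : K A k) :
    (Matrix.of fun i j => (Finsupp.single (a * el s j) (1:ℂ)) (el s i)).det
      = if ∀ x ∈ s.1, a * x ∈ s.1
        then ((-1 : ℂ) ^ (orderOf a - 1)) ^ (k / orderOf a) else 0 := by
  classical
  split_ifs with hP
  · have hu := inv_iff a hP
    set τ : Equiv.Perm {x // x ∈ s.1} := (Equiv.mulLeft a).subtypePerm (fun x => (hu x).symm) with hτ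
    set p : Equiv.Perm (Fin k) := ((s.1.orderIsoOfFin s.2).toEquiv.symm).permCongr τ with hp
    have hpj : ∀ j, el s (p j) = a * el s j := by
      intro j
      calc el s (p j)
          = ((s.1.orderIsoOfFin s.2).toEquiv ((s.1.orderIsoOfFin s.2).toEquiv.symm
              (τ ((s.1.orderIsoOfFin s.2).toEquiv j))) : A) := rfl
        _ = (τ ((s.1.orderIsoOfFin s.2).toEquiv j) : A) :=
            congrArg _ (Equiv.apply_symm_apply _ _)
        _ = a * el s j := rfl
    have hM : (Matrix.of fun i j => (Finsupp.single (a * el s j) (1:ℂ)) (el s i))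
        = (Equiv.Perm.permMatrix ℂ p).transpose := by
      ext i j
      rw [Matrix.of_apply, Finsupp.single_apply, Matrix.transpose_apply]
      have hiff : (a * el s j = el s i) ↔ i = p j := by
        rw [← hpj j]
        exact ⟨fun hc => (el_inj s hc.symm), fun hc => by rw [hc]⟩
      rw [Equiv.Perm.permMatrix, PEquiv.toMatrix_apply, Equiv.toPEquiv_apply]
      by_cases hij : a * el s j = el s i
      · rw [if_pos hij, if_pos]
        simp only [Option.mem_def, Option.some.injEq]
        exact (hiff.1 hij).symm
      · rw [if_neg hij, if_neg]
        simp only [Option.mem_def, Option.some.injEq]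
        exact fun hc => hij (hiff.2 hc.symm)
    rw [hM, Matrix.det_transpose, Matrix.det_permutation]
    rw [hp, Equiv.Perm.sign_permCongr, hτ, sign_mulLeft_subtypePerm a hu, s.2]
    push_cast
    ring
  · obtain ⟨x, hx, hax⟩ : ∃ x ∈ s.1, a * x ∉ s.1 := by
      by_contra hc
      push_neg at hc
      exact hP hc
    set j : Fin k := (s.1.orderIsoOfFin s.2).symm ⟨x, hx⟩ with hj
    apply Matrix.det_eq_zero_of_column_eq_zero j
    intro i
    have hel : el s j = x := by
      rw [hj, el]
      simp
    rw [Matrix.of_apply, Finsupp.single_apply, hel, if_neg]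
    exact fun hc => hax (hc ▸ el_mem s i)

end Main

theorem main (k d : ℕ) (a : A) (hd : orderOf a = d)
    (ρ : Module.End ℂ (⋀[ℂ]^k (A →₀ ℂ) : Submodule ℂ (ExteriorAlgebra ℂ (A →₀ ℂ))))
    (hρ : ∀ v : (⋀[ℂ]^k (A →₀ ℂ) : Submodule ℂ (ExteriorAlgebra ℂ (A →₀ ℂ))),
      (ρ v : ExteriorAlgebra ℂ (A →₀ ℂ)) =
        ExteriorAlgebra.map (Finsupp.lmapDomain ℂ ℂ (fun x => a * x)) (v : ExteriorAlgebra ℂ (A →₀ ℂ))) :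
    LinearMap.trace ℂ _ ρ =
      if d ∣ k then
        (-1 : ℂ) ^ ((d - 1) * (k / d)) * (Nat.choose (Fintype.card A / d) (k / d) : ℂ)
      else 0 := by
  classical
  subst hd
  rw [LinearMap.trace_eq_matrix_trace ℂ (B (A := A) (k := k)) ρ, Matrix.trace]
  have hcoord : ∀ (s : K A k) (x : (⋀[ℂ]^k (A →₀ ℂ) : Submodule ℂ _)),
      (B (A := A) (k := k)).repr x s = ψ s (x : ExteriorAlgebra ℂ (A →₀ ℂ)) := by
    intro s x
    have hlin : ((B (A := A) (k := k)).coord s)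
        = (ψ s) ∘ₗ (Submodule.subtype _) := by
      apply (B (A := A) (k := k)).ext
      intro t
      rw [Module.Basis.coord_apply, Module.Basis.repr_self, LinearMap.comp_apply, Submodule.subtype_apply,
        B_apply]
      show _ = ψ s (E t)
      rw [ψ_E, Finsupp.single_apply]
      by_cases h : s = t
      · simp [h]
      · rw [if_neg h, if_neg (fun hc => h hc.symm)]
    have := congrArg (fun f => f x) hlin
    simpa using this
  have hdiag : ∀ s : K A k, ((LinearMap.toMatrix (B (A := A) (k := k)) (B (A := A) (k := k))) ρ).diag s
      = if ∀ x ∈ s.1, a * x ∈ s.1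
        then ((-1 : ℂ) ^ (orderOf a - 1)) ^ (k / orderOf a) else 0 := by
    intro s
    rw [Matrix.diag_apply, LinearMap.toMatrix_apply, hcoord, hρ, B_apply]
    show ψ s (ExteriorAlgebra.map (Finsupp.lmapDomain ℂ ℂ (fun x => a * x)) (E s)) = _
    rw [E, map_apply_ιMulti, ψ_ιMulti, ← det_term a s]
    congr 1
    ext i j
    rw [Matrix.of_apply, Matrix.of_apply]
    congr 1
    show Finsupp.lmapDomain ℂ ℂ (fun x => a * x) (Finsupp.single (el s j) 1) = _
    rw [Finsupp.lmapDomain_apply, Finsupp.mapDomain_single]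
  rw [Finset.sum_congr rfl (fun s _ => hdiag s)]
  rw [Finset.sum_ite, Finset.sum_const, Finset.sum_const_zero, add_zero]
  rw [count_invariant a k]
  split_ifs with h
  · rw [nsmul_eq_mul, ← pow_mul, mul_comm]
  · rw [zero_nsmul]

end Stmt17

/-- Let `A` be a finite abelian group of order `N`, `R = ℂ[A]` its regular
representation (with `a ∈ A` acting on the basis `(δ_b)_{b ∈ A}` by translation,
i.e., by `Finsupp.lmapDomain ℂ ℂ (a * ·)`), and let `ρ` be the induced action of an
element `a` of order `d` on the `k`-th exterior power `⋀^k R`. Then the trace of `ρ`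
is `(−1)^{(d−1)(k/d)} C(N/d, k/d)` if `d ∣ k`, and `0` otherwise. -/
theorem stmt_17 (A : Type) [CommGroup A] [Fintype A] (k d : ℕ) (a : A)
    (hd : orderOf a = d)
    (ρ : Module.End ℂ (⋀[ℂ]^k (A →₀ ℂ) : Submodule ℂ (ExteriorAlgebra ℂ (A →₀ ℂ))))
    (hρ : ∀ v : (⋀[ℂ]^k (A →₀ ℂ) : Submodule ℂ (ExteriorAlgebra ℂ (A →₀ ℂ))),
      (ρ v : ExteriorAlgebra ℂ (A →₀ ℂ)) =
        ExteriorAlgebra.map (Finsupp.lmapDomain ℂ ℂ (fun x => a * x)) (v : ExteriorAlgebra ℂ (A →₀ ℂ))) :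
    LinearMap.trace ℂ _ ρ =
      if d ∣ k then
        (-1 : ℂ) ^ ((d - 1) * (k / d)) * (Nat.choose (Fintype.card A / d) (k / d) : ℂ)
      else 0 := by
  letI : LinearOrder A := LinearOrder.lift' (Fintype.equivFin A) (Fintype.equivFin A).injective
  exact Stmt17.main k d a hd ρ hρ
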